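/- Let m ≥ 2 and let F be an algebraically closed field containing a nontrivial m-th root of unity ε₀ (i.e. m is not a power of char F). For a, b ∈ F*, define the 2m×2m block matrix Z_{a,b} = [[aJ, E],[0, bJ]] where J = J_{0,m}. If S_m(a,b) := Σ_{i+j=m-1} a^i b^j ≠ 0 and a, b ≠ 0, then Z_{a,b} is nilpotent with exactly two Jordan blocks, of sizes m+1 and m−1; if S_m(a,b) = 0 and a, b ≠ 0, then Z_{a,b} is nilpotent with two Jordan blocks each of size m. -/
import Mathlib


/-- The nilpotent Jordan block of size `m`. -/
def jordanBlock (F : Type*) [Field F] (m : ℕ) : Matrix (Fin m) (Fin m) F :=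
  Matrix.of fun i j => if (j : ℕ) = (i : ℕ) + 1 then 1 else 0

namespace Stmt17Aux

open Matrix

variable {F : Type*} [Field F] {m : ℕ}




def Sk (a b : F) (k : ℕ) : F := ∑ i ∈ Finset.range k, a ^ i * b ^ (k - 1 - i)

lemma Sk_zero (a b : F) : Sk a b 0 = 0 := by simp [Sk]

lemma Sk_one (a b : F) : Sk a b 1 = 1 := by simp [Sk]

lemma Sk_succ (a b : F) (k : ℕ) : Sk a b (k + 1) = a * Sk a b k + b ^ k := by
  rw [Sk, Finset.sum_range_succ', Sk, Finset.mul_sum]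
  simp only [Nat.add_sub_cancel, pow_zero, one_mul, Nat.sub_zero]
  congr 1
  refine Finset.sum_congr rfl fun i hi => ?_
  have : k - (i + 1) = k - 1 - i := by omega
  rw [this, pow_succ]
  ring

lemma Sk_succ' (a b : F) (k : ℕ) : Sk a b (k + 1) = b * Sk a b k + a ^ k := by
  rw [Sk, Finset.sum_range_succ, Sk, Finset.mul_sum]
  simp only [Nat.add_sub_cancel, Nat.sub_self, pow_zero, mul_one]
  congr 1
  refine Finset.sum_congr rfl fun i hi => ?_
  rw [Finset.mem_range] at hi
  have : k - i = (k - 1 - i) + 1 := by omega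
  rw [this, pow_succ]
  ring

lemma Sk_key (a b : F) {i m : ℕ} (h : i ≤ m) :
    b ^ (m - i) * Sk a b i + a ^ i * Sk a b (m - i) = Sk a b m := by
  induction i with
  | zero => simp [Sk_zero]
  | succ n ih =>
    have hn : n ≤ m := by omega
    rw [← ih hn]
    have h1 : m - n = (m - (n + 1)) + 1 := by omega
    rw [h1, Sk_succ a b (m - (n+1)), Sk_succ' a b n, pow_succ, pow_succ]
    ring

lemma sum_ite_eq_nat {m : ℕ} (f : Fin m → F) (n : ℕ) :
    (∑ k : Fin m, if (k : ℕ) = n then f k else 0) = if h : n < m then f ⟨n, h⟩ else 0 := by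
  split_ifs with h
  · rw [Finset.sum_eq_single (⟨n, h⟩ : Fin m)]
    · simp
    · intro k _ hk
      rw [if_neg fun e => hk (Fin.ext e)]
    · intro h'; exact absurd (Finset.mem_univ _) h'
  · refine Finset.sum_eq_zero fun k _ => if_neg fun e => ?_
    exact h (e ▸ k.isLt)

lemma sum_ite_shiftR {m : ℕ} (f : Fin m → F) (j : Fin m) :
    (∑ k : Fin m, if (j : ℕ) = (k : ℕ) + 1 then f k else 0) =
      if 0 < (j : ℕ) then f ⟨(j : ℕ) - 1, Nat.lt_of_le_of_lt (Nat.sub_le _ _) j.isLt⟩ else 0 := by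
  split_ifs with h
  · rw [Finset.sum_eq_single (⟨(j : ℕ) - 1, Nat.lt_of_le_of_lt (Nat.sub_le _ _) j.isLt⟩ : Fin m)]
    · exact if_pos (by simp only [Fin.val_mk]; omega)
    · intro k _ hk
      rw [if_neg]
      intro e
      exact hk (Fin.ext (by simp; omega))
    · intro h'; exact absurd (Finset.mem_univ _) h'
  · refine Finset.sum_eq_zero fun k _ => ?_
    rw [if_neg]; omega

lemma sum_ite_shiftP {m : ℕ} (f : Fin m → F) (j : Fin m) :
    (∑ k : Fin m, if (j : ℕ) = (k : ℕ) + 1 ∧ 1 ≤ (k : ℕ) then f k else 0) =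
      if 2 ≤ (j : ℕ) then f ⟨(j : ℕ) - 1, Nat.lt_of_le_of_lt (Nat.sub_le _ _) j.isLt⟩ else 0 := by
  split_ifs with h
  · rw [Finset.sum_eq_single (⟨(j : ℕ) - 1, Nat.lt_of_le_of_lt (Nat.sub_le _ _) j.isLt⟩ : Fin m)]
    · exact if_pos (by simp only [Fin.val_mk]; omega)
    · intro k _ hk
      rw [if_neg]
      intro e
      exact hk (Fin.ext (by simp; omega))
    · intro h'; exact absurd (Finset.mem_univ _) h'
  · refine Finset.sum_eq_zero fun k _ => ?_
    rw [if_neg]; omega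



/-- superdiagonal matrix with entry `c i` at `(i, i+1)` -/
def supD (c : Fin m → F) : Matrix (Fin m) (Fin m) F :=
  Matrix.of fun i j => if (j : ℕ) = (i : ℕ) + 1 then c i else 0

/-- subdiagonal matrix with entry `c j` at `(j+1, j)` -/
def subD (c : Fin m → F) : Matrix (Fin m) (Fin m) F :=
  Matrix.of fun i j => if (i : ℕ) = (j : ℕ) + 1 then c j else 0

/-- truncated Jordan block: ones at `(i, i+1)` for `i ≥ 1` -/
def pMat (F : Type*) [Field F] (m : ℕ) : Matrix (Fin m) (Fin m) F :=
  Matrix.of fun i j => if (j : ℕ) = (i : ℕ) + 1 ∧ 1 ≤ (i : ℕ) then 1 else 0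

/-- matrix with single entry `c` at `(0,0)` -/
def e10 (F : Type*) [Field F] (m : ℕ) (c : F) : Matrix (Fin m) (Fin m) F :=
  Matrix.of fun i j => if (i : ℕ) = 0 ∧ (j : ℕ) = 0 then c else 0

lemma jordanBlock_eq_supD : jordanBlock F m = supD (fun _ => 1) := rfl

lemma e10_zero : e10 F m (0 : F) = 0 := by
  ext i j; simp [e10]

lemma supD_mul_apply (c : Fin m → F) (M : Matrix (Fin m) (Fin m) F) (i j : Fin m) :
    (supD c * M) i j = if h : (i : ℕ) + 1 < m then c i * M ⟨(i : ℕ) + 1, h⟩ j else 0 := by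
  rw [Matrix.mul_apply]
  simp only [supD, Matrix.of_apply, ite_mul, zero_mul]
  exact sum_ite_eq_nat (fun k => c i * M k j) ((i : ℕ) + 1)

lemma mul_supD_apply (M : Matrix (Fin m) (Fin m) F) (c : Fin m → F) (i j : Fin m) :
    (M * supD c) i j = if 0 < (j : ℕ) then
      M i ⟨(j : ℕ) - 1, Nat.lt_of_le_of_lt (Nat.sub_le _ _) j.isLt⟩ *
        c ⟨(j : ℕ) - 1, Nat.lt_of_le_of_lt (Nat.sub_le _ _) j.isLt⟩ else 0 := by
  rw [Matrix.mul_apply]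
  simp only [supD, Matrix.of_apply, mul_ite, mul_zero]
  exact sum_ite_shiftR (fun k => M i k * c k) j

lemma mul_subD_apply (M : Matrix (Fin m) (Fin m) F) (c : Fin m → F) (i j : Fin m) :
    (M * subD c) i j = if h : (j : ℕ) + 1 < m then M i ⟨(j : ℕ) + 1, h⟩ * c j else 0 := by
  rw [Matrix.mul_apply]
  simp only [subD, Matrix.of_apply, mul_ite, mul_zero]
  exact sum_ite_eq_nat (fun k => M i k * c j) ((j : ℕ) + 1)

lemma subD_mul_apply (c : Fin m → F) (M : Matrix (Fin m) (Fin m) F) (i j : Fin m) :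
    (subD c * M) i j = if 0 < (i : ℕ) then
      c ⟨(i : ℕ) - 1, Nat.lt_of_le_of_lt (Nat.sub_le _ _) i.isLt⟩ *
        M ⟨(i : ℕ) - 1, Nat.lt_of_le_of_lt (Nat.sub_le _ _) i.isLt⟩ j else 0 := by
  rw [Matrix.mul_apply]
  simp only [subD, Matrix.of_apply, ite_mul, zero_mul]
  exact sum_ite_shiftR (fun k => c k * M k j) i

lemma mul_pMat_apply (M : Matrix (Fin m) (Fin m) F) (i j : Fin m) :
    (M * pMat F m) i j = if 2 ≤ (j : ℕ) then
      M i ⟨(j : ℕ) - 1, Nat.lt_of_le_of_lt (Nat.sub_le _ _) j.isLt⟩ else 0 := by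
  rw [Matrix.mul_apply]
  simp only [pMat, Matrix.of_apply, mul_ite, mul_zero, mul_one]
  exact sum_ite_shiftP (fun k => M i k) j

lemma mul_e10_apply (hm : 0 < m) (M : Matrix (Fin m) (Fin m) F) (c : F) (i j : Fin m) :
    (M * e10 F m c) i j = if (j : ℕ) = 0 then M i ⟨0, hm⟩ * c else 0 := by
  rw [Matrix.mul_apply]
  simp only [e10, Matrix.of_apply]
  by_cases hj : (j : ℕ) = 0
  · rw [if_pos hj]
    simp only [hj, and_true, mul_ite, mul_zero]
    have := sum_ite_eq_nat (fun k => M i k * c) 0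
    rw [dif_pos hm] at this
    exact this
  · rw [if_neg hj]
    refine Finset.sum_eq_zero fun k _ => by simp [hj]

lemma jordan_pow_apply (k : ℕ) (i j : Fin m) :
    ((jordanBlock F m) ^ k) i j = if (j : ℕ) = (i : ℕ) + k then 1 else 0 := by
  induction k generalizing i j with
  | zero =>
    simp only [pow_zero, Matrix.one_apply, Nat.add_zero, Fin.ext_iff]
    split_ifs with h1 h2 h2 <;> first | rfl | omega
  | succ n ih =>
    rw [pow_succ]
    nth_rewrite 2 [jordanBlock_eq_supD]
    rw [mul_supD_apply]
    split_ifs with h1 h2 h2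
    · rw [ih, if_pos (by simp only [Fin.val_mk]; omega), mul_one]
    · rw [ih, if_neg (by simp only [Fin.val_mk]; omega), zero_mul]
    · exact absurd h2 (by omega)
    · rfl

lemma jordan_pow_eq_zero {k : ℕ} (hk : m ≤ k) : (jordanBlock F m) ^ k = 0 := by
  ext i j
  rw [jordan_pow_apply, if_neg (by have := j.isLt; omega)]
  rfl

lemma fromBlocks_diag_pow {p q : ℕ} (A : Matrix (Fin p) (Fin p) F)
    (D : Matrix (Fin q) (Fin q) F) (k : ℕ) :
    (Matrix.fromBlocks A 0 0 D) ^ k = Matrix.fromBlocks (A ^ k) 0 0 (D ^ k) := by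
  induction k with
  | zero => simp [Matrix.fromBlocks_one]
  | succ n ih => rw [pow_succ, pow_succ, pow_succ, ih, Matrix.fromBlocks_multiply]; simp

variable (a b : F)

def dAf (a b : F) (m : ℕ) : Fin m → F :=
  fun i => if (i : ℕ) = 0 then Sk a b m else (a * b) ^ (m - 1 - (i : ℕ)) * Sk a b (i : ℕ)

def dDf (b : F) (m : ℕ) : Fin m → F := fun i => b ^ (m - 1 - (i : ℕ))

def Bf (a b : F) (m : ℕ) : Matrix (Fin m) (Fin m) F :=
  subD (fun j => Sk a b (m - 1 - (j : ℕ)))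

def Cf (a b : F) (m : ℕ) : Matrix (Fin m) (Fin m) F :=
  supD (fun i => -(a ^ (m - 1) * b ^ (m - 2 - (i : ℕ))))

/-- commutation of J with powers-diagonal -/
lemma eq_diag (c : F) :
    c • (jordanBlock F m * Matrix.diagonal (dDf c m)) =
      Matrix.diagonal (dDf c m) * jordanBlock F m := by
  ext i j
  rw [jordanBlock_eq_supD, Matrix.smul_apply, supD_mul_apply, mul_supD_apply]
  simp only [Matrix.diagonal_apply, Fin.ext_iff, Fin.val_mk, one_mul, mul_one, smul_eq_mul, dDf]
  split_ifs with h1 h2 h3 h4 h5 <;> first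
    | rfl
    | omega
    | (exfalso; omega)
    | (rw [smul_eq_mul, mul_zero])
    | skip
  case _ =>
    -- c * c^(m-1-j) = c^(m-1-i) with j = i+1
    rw [show m - 1 - (i : ℕ) = (m - 1 - ((i : ℕ) + 1)) + 1 by omega, pow_succ]
    ring
  all_goals simp

lemma diagA_e10 (hm : 2 ≤ m) :
    Matrix.diagonal (dAf a b m) * e10 F m 1 = e10 F m (Sk a b m) := by
  ext i j
  rw [Matrix.diagonal_mul]
  simp only [e10, Matrix.of_apply, dAf, mul_ite, mul_one, mul_zero]
  split_ifs with h1 <;> simp_all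

lemma subD_mul_diagonal (c d : Fin m → F) :
    subD c * Matrix.diagonal d = subD (fun j => c j * d j) := by
  ext i j
  rw [Matrix.mul_diagonal]
  simp only [subD, Matrix.of_apply, ite_mul, zero_mul]

lemma eq1 (hm : 2 ≤ m) :
    a • (jordanBlock F m * Matrix.diagonal (dAf a b m)) + Cf a b m =
      Matrix.diagonal (dAf a b m) * pMat F m := by
  ext i j
  have hi' := i.isLt
  have hj' := j.isLt
  rw [jordanBlock_eq_supD, Matrix.add_apply, Matrix.smul_apply, supD_mul_apply,
    Matrix.diagonal_mul]
  simp only [Cf, supD, pMat, Matrix.of_apply, Matrix.diagonal_apply, Fin.ext_iff, Fin.val_mk,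
    one_mul, dAf, smul_eq_mul, mul_ite, mul_zero, mul_one]
  split_ifs <;> first
    | (exfalso; first | exact ‹False› | omega)
    | simp
    | skip
  · -- j = i+1, i ≥ 1
    rw [show m - 1 - ((i : ℕ) + 1) = m - 2 - (i : ℕ) by omega,
      show m - 1 - (i : ℕ) = (m - 2 - (i : ℕ)) + 1 by omega,
      show m - 1 = (m - 2 - (i : ℕ)) + ((i : ℕ) + 1) by omega,
      Sk_succ' a b (i : ℕ), pow_add]
    ring
  · -- j = i+1, i = 0
    have hi : (i : ℕ) = 0 := by omega
    rw [hi, show m - 1 - (0 + 1) = m - 2 by omega, show (0:ℕ) + 1 = 1 by omega, Sk_one,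
      show m - 1 = (m - 2) + 1 by omega, show m - 2 - 0 = m - 2 by omega, pow_succ, mul_pow]
    ring

lemma eq2 (hm : 2 ≤ m) :
    a • (jordanBlock F m * Bf a b m) + Matrix.diagonal (dDf b m) =
      e10 F m (Sk a b m) + Bf a b m * jordanBlock F m := by
  ext i j
  have hi' := i.isLt
  have hj' := j.isLt
  rw [jordanBlock_eq_supD, Matrix.add_apply, Matrix.add_apply, Matrix.smul_apply,
    supD_mul_apply, mul_supD_apply]
  simp only [Bf, subD, e10, Matrix.of_apply, Matrix.diagonal_apply, Fin.ext_iff, Fin.val_mk,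
    one_mul, mul_one, dDf, smul_eq_mul]
  split_ifs <;> first
    | (exfalso; first | exact ‹False› | omega)
    | simp
    | skip
  · -- i = j = 0
    have hsm := Sk_succ a b (m - 1)
    rw [show m - 1 + 1 = m by omega] at hsm
    rw [show m - 1 - (j : ℕ) = m - 1 by omega, show m - 1 - (i : ℕ) = m - 1 by omega, hsm]
  · -- i = j ≥ 1
    rw [show m - 1 - ((j : ℕ) - 1) = (m - 1 - (j : ℕ)) + 1 by omega, Sk_succ,
      show m - 1 - (i : ℕ) = m - 1 - (j : ℕ) by omega]
  · -- i = j = m - 1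
    rw [show m - 1 - ((j : ℕ) - 1) = 1 by omega, show m - 1 - (i : ℕ) = 0 by omega, Sk_one,
      pow_zero]

lemma eq3 (hm : 2 ≤ m) :
    b • (jordanBlock F m * Cf a b m) = Cf a b m * pMat F m := by
  ext i j
  have hi' := i.isLt
  have hj' := j.isLt
  rw [jordanBlock_eq_supD, Matrix.smul_apply, supD_mul_apply, mul_pMat_apply]
  simp only [Cf, supD, Matrix.of_apply, Fin.ext_iff, Fin.val_mk, one_mul, smul_eq_mul]
  split_ifs <;> first
    | (exfalso; first | exact ‹False› | omega)
    | simp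
    | skip
  · rw [show m - 2 - (i : ℕ) = (m - 2 - ((i : ℕ) + 1)) + 1 by omega, pow_succ]
    ring

lemma eq4 (hm : 2 ≤ m) :
    b • (jordanBlock F m * Matrix.diagonal (dDf b m)) =
      Cf a b m * e10 F m 1 + Matrix.diagonal (dDf b m) * jordanBlock F m := by
  rw [eq_diag]
  ext i j
  rw [Matrix.add_apply, mul_e10_apply (by omega)]
  simp only [Cf, supD, Matrix.of_apply, Fin.ext_iff, Fin.val_mk, mul_one]
  split_ifs <;> first
    | (exfalso; first | exact ‹False› | omega)
    | simp
    | skip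

def eqv (m : ℕ) (hm : 2 ≤ m) : (Fin (m + 1) ⊕ Fin (m - 1)) ≃ (Fin m ⊕ Fin m) where
  toFun x :=
    match x with
    | Sum.inl i => if h : (i : ℕ) = 0 then Sum.inl ⟨0, by omega⟩
        else Sum.inr ⟨(i : ℕ) - 1, by have := i.isLt; omega⟩
    | Sum.inr j => Sum.inl ⟨(j : ℕ) + 1, by have := j.isLt; omega⟩
  invFun y :=
    match y with
    | Sum.inl i => if h : (i : ℕ) = 0 then Sum.inl ⟨0, by omega⟩
        else Sum.inr ⟨(i : ℕ) - 1, by have := i.isLt; omega⟩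
    | Sum.inr j => Sum.inl ⟨(j : ℕ) + 1, by have := j.isLt; omega⟩
  left_inv x := by
    rcases x with i | j
    · by_cases h : (i : ℕ) = 0
      · simp only [dif_pos h]
        rw [dif_pos trivial]
        exact congrArg Sum.inl (Fin.ext (by simp [h]))
      · simp only [dif_neg h]
        exact congrArg Sum.inl (Fin.ext (by simp; omega))
    · simp only []
      rw [dif_neg (by simp)]
      exact congrArg Sum.inr (Fin.ext (by simp))
  right_inv y := by
    rcases y with i | j
    · by_cases h : (i : ℕ) = 0
      · simp only [dif_pos h]
        rw [dif_pos trivial]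
        exact congrArg Sum.inl (Fin.ext (by simp [h]))
      · simp only [dif_neg h]
        exact congrArg Sum.inl (Fin.ext (by simp; omega))
    · simp only []
      rw [dif_neg (by simp)]
      exact congrArg Sum.inr (Fin.ext (by simp))

lemma reindexN (hm : 2 ≤ m) :
    (Matrix.reindex (eqv m hm) (eqv m hm)
        (Matrix.fromBlocks (jordanBlock F (m + 1)) 0 0 (jordanBlock F (m - 1)))) =
      Matrix.fromBlocks (pMat F m) (e10 F m 1) 0 (jordanBlock F m) := by
  ext i j
  rw [Matrix.reindex_apply, Matrix.submatrix_apply]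
  rcases i with i | i <;> rcases j with j | j <;>
    simp only [eqv, Equiv.coe_fn_symm_mk] <;>
    (try split_ifs) <;>
    simp only [Matrix.fromBlocks_apply₁₁, Matrix.fromBlocks_apply₁₂, Matrix.fromBlocks_apply₂₁,
      Matrix.fromBlocks_apply₂₂, jordanBlock, pMat, e10, Matrix.of_apply, Matrix.zero_apply,
      Fin.val_mk] <;>
    (try split_ifs) <;> first | rfl | exact (‹False›).elim | (exfalso; omega) | omega

def ddf (a b : F) (m : ℕ) : Fin m → F :=
  fun i => if (i : ℕ) = 0 then Sk a b m
    else (a * b) ^ (m - 1 - (i : ℕ)) * Sk a b (i : ℕ) +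
      Sk a b (m - 1 - ((i : ℕ) - 1)) * (b ^ (m - 1 - ((i : ℕ) - 1)))⁻¹ * (a ^ (m - 1) * b ^ (m - 2 - ((i : ℕ) - 1)))

lemma schur (hm : 2 ≤ m) :
    Matrix.diagonal (dAf a b m) -
      Bf a b m * Matrix.diagonal (fun i => (dDf b m i)⁻¹) * Cf a b m =
      Matrix.diagonal (ddf a b m) := by
  rw [Bf, subD_mul_diagonal]
  ext i j
  have hi' := i.isLt
  have hj' := j.isLt
  rw [Matrix.sub_apply, subD_mul_apply]
  simp only [Cf, supD, Matrix.of_apply, Matrix.diagonal_apply, Fin.ext_iff, Fin.val_mk,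
    dAf, ddf, dDf, mul_ite, mul_zero, ite_mul, zero_mul, mul_neg]
  split_ifs <;> first
    | rfl
    | exact (‹False›).elim
    | (exfalso; omega)
    | omega
    | skip
  all_goals first | rw [sub_zero] | ring

lemma ddf_ne_zero (hm : 2 ≤ m) (ha : a ≠ 0) (hb : b ≠ 0) (hS : Sk a b m ≠ 0) (i : Fin m) :
    ddf a b m i ≠ 0 := by
  have hi' := i.isLt
  by_cases h0 : (i : ℕ) = 0
  · simpa [ddf, h0] using hS
  · rw [ddf, if_neg h0]
    have h1 : m - 1 - ((i : ℕ) - 1) = m - (i : ℕ) := by omega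
    have h2 : m - 2 - ((i : ℕ) - 1) = m - 1 - (i : ℕ) := by omega
    rw [h1, h2]
    set s := m - 1 - (i : ℕ) with hs
    have h3 : m - (i : ℕ) = s + 1 := by omega
    have h4 : m - 1 = s + (i : ℕ) := by omega
    have key := Sk_key a b (show (i : ℕ) ≤ m by omega)
    rw [h3] at key ⊢
    rw [h4]
    have hbs : (b : F) ^ (s + 1) ≠ 0 := pow_ne_zero _ hb
    have hval : (a * b) ^ s * Sk a b (i : ℕ) +
        Sk a b (s + 1) * (b ^ (s + 1))⁻¹ * (a ^ (s + (i : ℕ)) * b ^ s) =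
        a ^ s * Sk a b m * b⁻¹ := by
      rw [← key]
      field_simp
      ring
    rw [hval]
    exact mul_ne_zero (mul_ne_zero (pow_ne_zero _ ha) hS) (inv_ne_zero hb)

end Stmt17Aux

open Stmt17Aux Matrix in
/-- For `a, b ≠ 0`, the block matrix `Z_{a,b} = [[aJ, E], [0, bJ]]` (with `J = J_{0,m}`,
`m ≥ 2`, over an algebraically closed field containing a nontrivial `m`-th root of
unity `ε₀`) is nilpotent with exactly two Jordan blocks: of sizes `m+1` and `m-1` if
`S_m(a,b) = Σ_{i+j=m-1} a^i b^j ≠ 0`, and both of size `m` if `S_m(a,b) = 0`. -/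
theorem stmt17 (F : Type*) [Field F] [IsAlgClosed F] (m : ℕ) (hm : 2 ≤ m)
    (ε₀ : F) (hε : ε₀ ^ m = 1) (hε1 : ε₀ ≠ 1)
    (a b : F) (ha : a ≠ 0) (hb : b ≠ 0)
    (Z : Matrix (Fin m ⊕ Fin m) (Fin m ⊕ Fin m) F)
    (hZ : Z = Matrix.fromBlocks (a • jordanBlock F m) 1 0 (b • jordanBlock F m)) :
    ((∑ i ∈ Finset.range m, a ^ i * b ^ (m - 1 - i)) ≠ 0 →
      IsNilpotent Z ∧
      ∃ (e : (Fin (m + 1) ⊕ Fin (m - 1)) ≃ (Fin m ⊕ Fin m))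
        (g : (Matrix (Fin m ⊕ Fin m) (Fin m ⊕ Fin m) F)ˣ),
        Z = (g : Matrix (Fin m ⊕ Fin m) (Fin m ⊕ Fin m) F) *
          (Matrix.reindex e e
            (Matrix.fromBlocks (jordanBlock F (m + 1)) 0 0 (jordanBlock F (m - 1)))) *
          ((g⁻¹ : (Matrix (Fin m ⊕ Fin m) (Fin m ⊕ Fin m) F)ˣ) :
            Matrix (Fin m ⊕ Fin m) (Fin m ⊕ Fin m) F)) ∧
    ((∑ i ∈ Finset.range m, a ^ i * b ^ (m - 1 - i)) = 0 →
      IsNilpotent Z ∧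
      ∃ g : (Matrix (Fin m ⊕ Fin m) (Fin m ⊕ Fin m) F)ˣ,
        Z = (g : Matrix (Fin m ⊕ Fin m) (Fin m ⊕ Fin m) F) *
          (Matrix.fromBlocks (jordanBlock F m) 0 0 (jordanBlock F m)) *
          ((g⁻¹ : (Matrix (Fin m ⊕ Fin m) (Fin m ⊕ Fin m) F)ˣ) :
            Matrix (Fin m ⊕ Fin m) (Fin m ⊕ Fin m) F)) := by
  subst hZ
  constructor
  · -- Case S_m ≠ 0
    intro hS
    have hSk : Sk a b m ≠ 0 := hS
    set G : Matrix (Fin m ⊕ Fin m) (Fin m ⊕ Fin m) F :=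
      Matrix.fromBlocks (Matrix.diagonal (dAf a b m)) (Bf a b m) (Cf a b m)
        (Matrix.diagonal (dDf b m)) with hG
    have hg : Matrix.fromBlocks (a • jordanBlock F m) 1 0 (b • jordanBlock F m) * G =
        G * Matrix.fromBlocks (pMat F m) (e10 F m 1) 0 (jordanBlock F m) := by
      rw [hG, Matrix.fromBlocks_multiply, Matrix.fromBlocks_multiply]
      simp only [Matrix.smul_mul, Matrix.one_mul, Matrix.zero_mul, Matrix.mul_zero,
        Matrix.mul_one, add_zero, zero_add]
      rw [eq1 a b hm, eq2 a b hm, eq3 a b hm, eq4 a b hm, diagA_e10 a b hm]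
    have hDD : Matrix.diagonal (dDf b m) * Matrix.diagonal (fun i => (dDf b m i)⁻¹) = 1 := by
      rw [Matrix.diagonal_mul_diagonal,
        show (fun i => dDf b m i * (dDf b m i)⁻¹) = fun _ : Fin m => (1 : F) from
          funext fun i => mul_inv_cancel₀ (pow_ne_zero _ hb), Matrix.diagonal_one]
    letI : Invertible (Matrix.diagonal (dDf b m)) :=
      invertibleOfRightInverse _ _ hDD
    have hdet : G.det ≠ 0 := by
      rw [hG, Matrix.det_fromBlocks₂₂, invOf_eq_right_inv hDD, schur a b hm,
        Matrix.det_diagonal, Matrix.det_diagonal]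
      exact mul_ne_zero (Finset.prod_ne_zero_iff.mpr fun i _ => pow_ne_zero _ hb)
        (Finset.prod_ne_zero_iff.mpr fun i _ => ddf_ne_zero a b hm ha hb hSk i)
    have hU : IsUnit G := (Matrix.isUnit_iff_isUnit_det G).mpr (Ne.isUnit hdet)
    have hu : (hU.unit : Matrix (Fin m ⊕ Fin m) (Fin m ⊕ Fin m) F) = G := hU.unit_spec
    have hsim : Matrix.fromBlocks (a • jordanBlock F m) 1 0 (b • jordanBlock F m) =
        (hU.unit : Matrix (Fin m ⊕ Fin m) (Fin m ⊕ Fin m) F) *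
          (Matrix.reindex (eqv m hm) (eqv m hm)
          (Matrix.fromBlocks (jordanBlock F (m + 1)) 0 0 (jordanBlock F (m - 1)))) *
          (↑hU.unit⁻¹ : Matrix (Fin m ⊕ Fin m) (Fin m ⊕ Fin m) F) := by
      rw [reindexN hm]
      have h1 : Matrix.fromBlocks (a • jordanBlock F m) 1 0 (b • jordanBlock F m) * (hU.unit : Matrix (Fin m ⊕ Fin m) (Fin m ⊕ Fin m) F) =
          (hU.unit : Matrix (Fin m ⊕ Fin m) (Fin m ⊕ Fin m) F) *
            Matrix.fromBlocks (pMat F m) (e10 F m 1) 0 (jordanBlock F m) := by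
        rw [hu]; exact hg
      calc Matrix.fromBlocks (a • jordanBlock F m) 1 0 (b • jordanBlock F m)
          = Matrix.fromBlocks (a • jordanBlock F m) 1 0 (b • jordanBlock F m) *
              ↑hU.unit * ↑hU.unit⁻¹ := by rw [mul_assoc, Units.mul_inv, mul_one]
        _ = ↑hU.unit * Matrix.fromBlocks (pMat F m) (e10 F m 1) 0 (jordanBlock F m) *
              ↑hU.unit⁻¹ := by rw [h1]
    have hNN : (Matrix.fromBlocks (jordanBlock F (m + 1)) 0 0 (jordanBlock F (m - 1))) ^ (m + 1)
        = 0 := by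
      rw [fromBlocks_diag_pow, jordan_pow_eq_zero (le_refl (m + 1)),
        jordan_pow_eq_zero (show m - 1 ≤ m + 1 by omega), Matrix.fromBlocks_zero]
    have hXpow : (Matrix.reindex (eqv m hm) (eqv m hm)
        (Matrix.fromBlocks (jordanBlock F (m + 1)) 0 0 (jordanBlock F (m - 1)))) ^ (m + 1)
        = 0 := by
      rw [← Matrix.reindexAlgEquiv_apply F F (eqv m hm), ← map_pow, hNN, map_zero]
    refine ⟨⟨m + 1, ?_⟩, eqv m hm, hU.unit, hsim⟩
    rw [hsim, Units.conj_pow, hXpow, mul_zero, zero_mul]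
  · -- Case S_m = 0
    intro hS0
    have hSk0 : Sk a b m = 0 := hS0
    set G : Matrix (Fin m ⊕ Fin m) (Fin m ⊕ Fin m) F :=
      Matrix.fromBlocks (Matrix.diagonal (dDf a m)) (Bf a b m) 0
        (Matrix.diagonal (dDf b m)) with hG
    have eq2' : a • (jordanBlock F m * Bf a b m) + Matrix.diagonal (dDf b m) =
        Bf a b m * jordanBlock F m := by
      have h := eq2 a b hm
      rwa [hSk0, e10_zero, zero_add] at h
    have hg : Matrix.fromBlocks (a • jordanBlock F m) 1 0 (b • jordanBlock F m) * G =
        G * Matrix.fromBlocks (jordanBlock F m) 0 0 (jordanBlock F m) := by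
      rw [hG, Matrix.fromBlocks_multiply, Matrix.fromBlocks_multiply]
      simp only [Matrix.smul_mul, Matrix.one_mul, Matrix.zero_mul, Matrix.mul_zero,
        Matrix.mul_one, add_zero, zero_add]
      rw [eq_diag a, eq_diag b, eq2']
    have hdet : G.det ≠ 0 := by
      rw [hG, Matrix.det_fromBlocks_zero₂₁, Matrix.det_diagonal, Matrix.det_diagonal]
      exact mul_ne_zero (Finset.prod_ne_zero_iff.mpr fun i _ => pow_ne_zero _ ha)
        (Finset.prod_ne_zero_iff.mpr fun i _ => pow_ne_zero _ hb)
    have hU : IsUnit G := (Matrix.isUnit_iff_isUnit_det G).mpr (Ne.isUnit hdet)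
    have hu : (hU.unit : Matrix (Fin m ⊕ Fin m) (Fin m ⊕ Fin m) F) = G := hU.unit_spec
    have hsim : Matrix.fromBlocks (a • jordanBlock F m) 1 0 (b • jordanBlock F m) =
        (hU.unit : Matrix (Fin m ⊕ Fin m) (Fin m ⊕ Fin m) F) *
          Matrix.fromBlocks (jordanBlock F m) 0 0 (jordanBlock F m) *
          (↑hU.unit⁻¹ : Matrix (Fin m ⊕ Fin m) (Fin m ⊕ Fin m) F) := by
      have h1 : Matrix.fromBlocks (a • jordanBlock F m) 1 0 (b • jordanBlock F m) * (hU.unit : Matrix (Fin m ⊕ Fin m) (Fin m ⊕ Fin m) F) =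
          (hU.unit : Matrix (Fin m ⊕ Fin m) (Fin m ⊕ Fin m) F) *
            Matrix.fromBlocks (jordanBlock F m) 0 0 (jordanBlock F m) := by
        rw [hu]; exact hg
      calc Matrix.fromBlocks (a • jordanBlock F m) 1 0 (b • jordanBlock F m)
          = Matrix.fromBlocks (a • jordanBlock F m) 1 0 (b • jordanBlock F m) *
              ↑hU.unit * ↑hU.unit⁻¹ := by rw [mul_assoc, Units.mul_inv, mul_one]
        _ = ↑hU.unit * Matrix.fromBlocks (jordanBlock F m) 0 0 (jordanBlock F m) *
              ↑hU.unit⁻¹ := by rw [h1]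
    have hNN : (Matrix.fromBlocks (jordanBlock F m) 0 0 (jordanBlock F m)) ^ m = 0 := by
      rw [fromBlocks_diag_pow, jordan_pow_eq_zero (le_refl m), Matrix.fromBlocks_zero]
    refine ⟨⟨m, ?_⟩, hU.unit, hsim⟩
    rw [hsim, Units.conj_pow, hNN, mul_zero, zero_mul]
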